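/- Let x̄ be a Lipschitz continuous W^{1,1}-local minimizer of problem (CV) such that hypothesis (CV1) holds and int T_A(z) ≠ ∅ for all z ∈ x̄([S,T]) ∩ ∂A. Then there exist positive constants ε, ρ, β, C, C₁ and a measurable function v : [S,T] → ℝⁿ such that: (i) ‖v − ẋ̄‖_{L∞} ≤ C and ‖v‖_{L∞} ≤ C₁; (ii) for every τ ∈ [S,T] with x̄(τ) ∈ ∂A, one has (v(t) − ẋ̄(t)) · η < −β for all η ∈ co(N_A(x̄(s)) ∩ ∂𝔹), for a.e. s, t ∈ (τ − ε, τ]; (iii) if x₀ = x̄(S) ∈ ∂A, then (v(t) − ẋ̄(t)) · η < −β for all η ∈ co(N_A(x) ∩ ∂𝔹) and all x ∈ (x₀ + ρ𝔹) ∩ ∂A, for a.e. t ∈ [S, S + ε). -/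

import Mathlib

open Set MeasureTheory Filter Topology Metric
open scoped RealInnerProductSpace

noncomputable section

/-- The proximal normal cone to `A` at `x`. -/
def proxNormalCone {H : Type*} [NormedAddCommGroup H] [InnerProductSpace ℝ H]
    (A : Set H) (x : H) : Set H :=
  {η | ∃ M > 0, ∀ y ∈ A, ⟪η, y - x⟫ ≤ M * ‖y - x‖ ^ 2}

/-- The limiting normal cone to `A` at `x`. -/
def limitingNormalCone {H : Type*} [NormedAddCommGroup H] [InnerProductSpace ℝ H]
    (A : Set H) (x : H) : Set H :=
  {η | ∃ xs ηs : ℕ → H, (∀ i, xs i ∈ A) ∧ (∀ i, ηs i ∈ proxNormalCone A (xs i)) ∧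
    Tendsto xs atTop (𝓝 x) ∧ Tendsto ηs atTop (𝓝 η)}

/-- The Clarke tangent cone to `A` at `x`. -/
def clarkeTangentCone {H : Type*} [NormedAddCommGroup H] [InnerProductSpace ℝ H]
    (A : Set H) (x : H) : Set H :=
  {ξ | ∀ (xs : ℕ → H) (ts : ℕ → ℝ), (∀ i, xs i ∈ A) → Tendsto xs atTop (𝓝 x) →
      (∀ i, 0 < ts i) → Tendsto ts atTop (𝓝 0) →
      ∃ as : ℕ → H, (∀ i, as i ∈ A) ∧
        Tendsto (fun i => (ts i)⁻¹ • (as i - xs i)) atTop (𝓝 ξ)}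

section AuxLemmas

variable {H : Type*} [NormedAddCommGroup H] [InnerProductSpace ℝ H]

theorem aux_inner_nonpos {A : Set H} {z ξ η : H}
    (hξ : ξ ∈ clarkeTangentCone A z) (hη : η ∈ limitingNormalCone A z) :
    ⟪ξ, η⟫ ≤ 0 := by
  obtain ⟨xs, ηs, hxsA, hprox, hxs, hηs⟩ := hη
  choose M hMpos hM using hprox
  set ts : ℕ → ℝ := fun i => (1 / ((i : ℝ) + 1)) * min 1 (1 / (M i)) with hts
  have hi1 : ∀ i : ℕ, (0:ℝ) < (i:ℝ) + 1 := fun i => by positivity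
  have htspos : ∀ i, 0 < ts i := fun i =>
    mul_pos (by positivity) (lt_min one_pos (one_div_pos.mpr (hMpos i)))
  have htsle : ∀ i, ts i ≤ 1 / ((i:ℝ) + 1) := fun i => by
    have h1 : min 1 (1 / (M i)) ≤ 1 := min_le_left _ _
    have h2 : (0:ℝ) ≤ 1 / ((i:ℝ) + 1) := by positivity
    calc ts i ≤ (1 / ((i:ℝ) + 1)) * 1 := by
          exact mul_le_mul_of_nonneg_left h1 h2
      _ = 1 / ((i:ℝ) + 1) := mul_one _
  have htsz : Tendsto ts atTop (𝓝 0) :=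
    squeeze_zero (fun i => (htspos i).le) htsle tendsto_one_div_add_atTop_nhds_zero_nat
  obtain ⟨as, hasA, hw⟩ := hξ xs ts hxsA hxs htspos htsz
  set w : ℕ → H := fun i => (ts i)⁻¹ • (as i - xs i) with hwdef
  have hMts : ∀ i : ℕ, M i * ts i ≤ 1 / ((i:ℝ) + 1) := fun i => by
    have hM0 := hMpos i
    have h1 : M i * min 1 (1 / M i) ≤ 1 := by
      calc M i * min 1 (1/M i) ≤ M i * (1/M i) :=
            mul_le_mul_of_nonneg_left (min_le_right _ _) hM0.le
        _ = 1 := by field_simp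
    calc M i * ts i = (1 / ((i:ℝ)+1)) * (M i * min 1 (1/M i)) := by rw [hts]; ring
      _ ≤ (1 / ((i:ℝ)+1)) * 1 := mul_le_mul_of_nonneg_left h1 (by positivity)
      _ = 1 / ((i:ℝ) + 1) := mul_one _
  have hkey : ∀ i : ℕ, ⟪ηs i, w i⟫ ≤ (1 / ((i:ℝ) + 1)) * ‖w i‖ ^ 2 := by
    intro i
    have h1 := hM i (as i) (hasA i)
    have hts0 : ts i ≠ 0 := (htspos i).ne'
    have he : as i - xs i = ts i • w i := (smul_inv_smul₀ hts0 _).symm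
    rw [he, real_inner_smul_right, norm_smul, Real.norm_eq_abs,
      abs_of_pos (htspos i)] at h1
    have h2 : ts i * ⟪ηs i, w i⟫ ≤ ts i * ((M i * ts i) * ‖w i‖ ^ 2) := by
      nlinarith [h1]
    have h3 : ⟪ηs i, w i⟫ ≤ (M i * ts i) * ‖w i‖ ^ 2 :=
      le_of_mul_le_mul_left h2 (htspos i)
    have h4 : (M i * ts i) * ‖w i‖ ^ 2 ≤ (1 / ((i:ℝ) + 1)) * ‖w i‖ ^ 2 :=
      mul_le_mul_of_nonneg_right (hMts i) (by positivity)
    linarith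
  have hupper : Tendsto (fun i : ℕ => (1 / ((i:ℝ) + 1)) * ‖w i‖ ^ 2) atTop (𝓝 0) := by
    have h1 : Tendsto (fun i : ℕ => ‖w i‖ ^ 2) atTop (𝓝 (‖ξ‖ ^ 2)) :=
      (hw.norm).pow 2
    have := tendsto_one_div_add_atTop_nhds_zero_nat.mul h1
    simpa using this
  have hinner : Tendsto (fun i => ⟪ηs i, w i⟫) atTop (𝓝 ⟪η, ξ⟫) := hηs.inner hw
  have := le_of_tendsto_of_tendsto' hinner hupper hkey
  rwa [real_inner_comm] at this

theorem aux_closed {A : Set H} {z η : H} {xs ηs : ℕ → H}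
    (hmem : ∀ i, ηs i ∈ limitingNormalCone A (xs i))
    (hx : Tendsto xs atTop (𝓝 z)) (hη : Tendsto ηs atTop (𝓝 η)) :
    η ∈ limitingNormalCone A z := by
  have h : ∀ i : ℕ, ∃ a b : H, a ∈ A ∧ b ∈ proxNormalCone A a ∧
      ‖a - xs i‖ < 1 / ((i:ℝ) + 1) ∧ ‖b - ηs i‖ < 1 / ((i:ℝ) + 1) := by
    intro i
    obtain ⟨as, bs, hAm, hP, ha, hb⟩ := hmem i
    have hpos : (0:ℝ) < 1 / ((i:ℝ) + 1) := by positivity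
    obtain ⟨N₁, hN₁⟩ := Metric.tendsto_atTop.mp ha _ hpos
    obtain ⟨N₂, hN₂⟩ := Metric.tendsto_atTop.mp hb _ hpos
    refine ⟨as (max N₁ N₂), bs (max N₁ N₂), hAm _, hP _, ?_, ?_⟩
    · rw [← dist_eq_norm]; exact hN₁ _ (le_max_left _ _)
    · rw [← dist_eq_norm]; exact hN₂ _ (le_max_right _ _)
  choose a b haA hbP hax hbη using h
  have hz1 : Tendsto (fun i => a i - xs i) atTop (𝓝 0) :=
    squeeze_zero_norm (fun i => (hax i).le) tendsto_one_div_add_atTop_nhds_zero_nat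
  have hz2 : Tendsto (fun i => b i - ηs i) atTop (𝓝 0) :=
    squeeze_zero_norm (fun i => (hbη i).le) tendsto_one_div_add_atTop_nhds_zero_nat
  refine ⟨a, b, haA, hbP, ?_, ?_⟩
  · have := hz1.add hx
    simpa using this
  · have := hz2.add hη
    simpa using this

theorem aux_local {n : ℕ} {A : Set (EuclideanSpace ℝ (Fin n))} {z : EuclideanSpace ℝ (Fin n)}
    (h : (interior (clarkeTangentCone A z)).Nonempty) :
    ∃ ξ : EuclideanSpace ℝ (Fin n), ∃ r ρ : ℝ, 0 < r ∧ 0 < ρ ∧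
      ∀ x ∈ closedBall z ρ, ∀ η ∈ limitingNormalCone A x, ‖η‖ = 1 → ⟪ξ, η⟫ ≤ -r := by
  obtain ⟨ξ, hξ⟩ := h
  obtain ⟨r₀, hr₀, hball⟩ := Metric.isOpen_iff.mp isOpen_interior ξ hξ
  have hhalf : ∀ η ∈ limitingNormalCone A z, ‖η‖ = 1 → ⟪ξ, η⟫ ≤ -(r₀/2) := by
    intro η hη hn
    have hmem : ξ + (r₀/2) • η ∈ clarkeTangentCone A z := by
      apply interior_subset
      apply hball
      rw [mem_ball, dist_eq_norm]
      simp only [add_sub_cancel_left]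
      rw [norm_smul, Real.norm_eq_abs, abs_of_pos (by linarith : (0:ℝ) < r₀/2), hn]
      linarith
    have h0 := aux_inner_nonpos hmem hη
    rw [inner_add_left, real_inner_smul_left, real_inner_self_eq_norm_sq, hn] at h0
    linarith
  suffices hρ : ∃ ρ > (0:ℝ), ∀ x ∈ closedBall z ρ, ∀ η ∈ limitingNormalCone A x,
      ‖η‖ = 1 → ⟪ξ, η⟫ ≤ -(r₀/4) by
    obtain ⟨ρ, hρpos, hρ⟩ := hρ
    exact ⟨ξ, r₀/4, ρ, by linarith, hρpos, hρ⟩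
  by_contra hc
  push_neg at hc
  have hseq : ∀ i : ℕ, ∃ x η : EuclideanSpace ℝ (Fin n),
      x ∈ closedBall z (1 / ((i:ℝ)+1)) ∧ η ∈ limitingNormalCone A x ∧ ‖η‖ = 1 ∧
      -(r₀/4) < ⟪ξ, η⟫ := by
    intro i
    obtain ⟨x, hx, η, hη, hn, hlt⟩ := hc (1 / ((i:ℝ)+1)) (by positivity)
    exact ⟨x, η, hx, hη, hn, by linarith⟩
  choose x ηf hx hη hn hlt using hseq
  have hxz : Tendsto x atTop (𝓝 z) := by
    rw [tendsto_iff_dist_tendsto_zero]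
    exact squeeze_zero (fun i => dist_nonneg) (fun i => hx i)
      tendsto_one_div_add_atTop_nhds_zero_nat
  have hsph : ∀ i, ηf i ∈ sphere (0 : EuclideanSpace ℝ (Fin n)) 1 := fun i =>
    mem_sphere_zero_iff_norm.mpr (hn i)
  obtain ⟨η, hηsph, φ, hφ, hconv⟩ :=
    (isCompact_sphere (0 : EuclideanSpace ℝ (Fin n)) 1).tendsto_subseq hsph
  have hηN : η ∈ limitingNormalCone A z :=
    aux_closed (fun i => hη (φ i)) (hxz.comp hφ.tendsto_atTop) hconv
  have h1 : ⟪ξ, η⟫ ≤ -(r₀/2) := hhalf η hηN (mem_sphere_zero_iff_norm.mp hηsph)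
  have h2 : -(r₀/4) ≤ ⟪ξ, η⟫ := by
    have hten : Tendsto (fun i => ⟪ξ, ηf (φ i)⟫) atTop (𝓝 ⟪ξ, η⟫) :=
      tendsto_const_nhds.inner hconv
    exact ge_of_tendsto hten (Eventually.of_forall fun i => (hlt (φ i)).le)
  linarith

theorem aux_deriv_bound {E : Type*} [NormedAddCommGroup E] [NormedSpace ℝ E] [CompleteSpace E]
    (S T K : ℝ) (hK : 0 ≤ K) (x' : ℝ → E) (hI : IntegrableOn x' (Icc S T) volume)
    (hinc : ∀ a b : ℝ, S ≤ a → a ≤ b → b ≤ T → ‖∫ t in Icc a b, x' t‖ ≤ K * (b - a)) :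
    ∀ᵐ t ∂(volume.restrict (Icc S T)), ‖x' t‖ ≤ K := by
  set f := (Icc S T).indicator x' with hf
  have hfint : Integrable f := (integrable_indicator_iff measurableSet_Icc).mpr hI
  have hbound : ∀ a b : ℝ, a ≤ b → ‖∫ t in Icc a b, f t‖ ≤ K * (b - a) := by
    intro a b hab
    rw [hf, setIntegral_indicator measurableSet_Icc, Icc_inter_Icc]
    by_cases hcase : max a S ≤ min b T
    · have h1 := hinc (max a S) (min b T) (le_max_right _ _) hcase (min_le_right _ _)
      refine h1.trans ?_
      have h2 : min b T - max a S ≤ b - a := by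
        have := le_max_left a S; have := min_le_left b T; linarith
      exact mul_le_mul_of_nonneg_left h2 hK
    · rw [Icc_eq_empty hcase]
      simp only [Measure.restrict_empty, integral_zero_measure, norm_zero]
      exact mul_nonneg hK (by linarith)
  have hae := IsUnifLocDoublingMeasure.ae_tendsto_average (μ := (volume : Measure ℝ))
    hfint.locallyIntegrable 1
  have hfK : ∀ᵐ t ∂(volume : Measure ℝ), ‖f t‖ ≤ K := by
    filter_upwards [hae] with t ht
    have ht' := ht (fun _ : ℝ => t) (fun r => r) tendsto_id
      (by filter_upwards [self_mem_nhdsWithin] with r hr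
          exact mem_closedBall_self (by simpa using le_of_lt hr))
    have hle : ∀ᶠ r in 𝓝[>] (0:ℝ), ‖⨍ y in closedBall t r, f y‖ ≤ K := by
      filter_upwards [self_mem_nhdsWithin] with r hr
      have hr0 : (0:ℝ) < r := hr
      rw [setAverage_eq, norm_smul, Real.closedBall_eq_Icc]
      have hvol : (volume (Icc (t - r) (t + r))).toReal = 2 * r := by
        rw [Real.volume_Icc]
        rw [ENNReal.toReal_ofReal (by linarith)]
        ring
      rw [measureReal_def, hvol]
      have h1 := hbound (t - r) (t + r) (by linarith)
      have h2 : ((t + r) - (t - r)) = 2 * r := by ring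
      rw [h2] at h1
      rw [Real.norm_eq_abs, abs_of_nonneg (by positivity : (0:ℝ) ≤ (2*r)⁻¹)]
      calc (2*r)⁻¹ * ‖∫ y in Icc (t-r) (t+r), f y‖ ≤ (2*r)⁻¹ * (K * (2*r)) :=
            mul_le_mul_of_nonneg_left h1 (by positivity)
        _ = K := by field_simp
    exact le_of_tendsto ht'.norm hle
  have := ae_restrict_of_ae (μ := (volume : Measure ℝ)) (s := Icc S T) hfK
  filter_upwards [this, ae_restrict_mem measurableSet_Icc] with t h1 h2
  rwa [hf, indicator_of_mem h2] at h1

end AuxLemmas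

section Pick

variable {E : Type*} [NormedAddCommGroup E]

/-- Pick the payload of the first triple whose closed ball contains `x`. -/
def pickVec : List (E × ℝ × E) → E → E
  | [], _ => 0
  | e :: l, x => if dist x e.1 ≤ e.2.1 then e.2.2 else pickVec l x

theorem pickVec_measurable [MeasurableSpace E] [OpensMeasurableSpace E] :
    ∀ l : List (E × ℝ × E), Measurable (pickVec l)
  | [] => measurable_const
  | e :: l => by
    have h : MeasurableSet {x : E | dist x e.1 ≤ e.2.1} :=
      measurableSet_closedBall
    exact Measurable.ite h measurable_const (pickVec_measurable l)

theorem pickVec_spec : ∀ (l : List (E × ℝ × E)) (x : E),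
    (∃ e ∈ l, dist x e.1 ≤ e.2.1) →
    ∃ e ∈ l, dist x e.1 ≤ e.2.1 ∧ pickVec l x = e.2.2
  | [], x, h => by simp at h
  | e :: l, x, h => by
    by_cases hd : dist x e.1 ≤ e.2.1
    · exact ⟨e, List.mem_cons_self, hd, by simp [pickVec, hd]⟩
    · obtain ⟨e', he', hd'⟩ := h
      have he'' : e' ∈ l := by
        rcases List.mem_cons.mp he' with rfl | h'
        · exact absurd hd' hd
        · exact h'
      obtain ⟨e'', h1, h2, h3⟩ := pickVec_spec l x ⟨e', he'', hd'⟩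
      exact ⟨e'', List.mem_cons_of_mem _ h1, h2, by simp [pickVec, hd, h3]⟩

theorem pickVec_range : ∀ (l : List (E × ℝ × E)) (x : E),
    pickVec l x = 0 ∨ ∃ e ∈ l, pickVec l x = e.2.2
  | [], _ => Or.inl rfl
  | e :: l, x => by
    by_cases hd : dist x e.1 ≤ e.2.1
    · exact Or.inr ⟨e, List.mem_cons_self, by simp [pickVec, hd]⟩
    · rcases pickVec_range l x with h | ⟨e', h1, h2⟩
      · exact Or.inl (by simp [pickVec, hd, h])
      · exact Or.inr ⟨e', List.mem_cons_of_mem _ h1, by simp [pickVec, hd, h2]⟩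

end Pick

variable {n : ℕ}

/-- An admissible arc for the calculus of variations problem (CV): `x` is a `W^{1,1}`
arc with (a.e.) derivative `x'`, satisfying the initial condition `x(S) = x₀`, the
state constraint `x(t) ∈ A` on `[S,T]`, and having finite cost. -/
def CVAdmissible (S T : ℝ) (L : ℝ → EuclideanSpace ℝ (Fin n) → EuclideanSpace ℝ (Fin n) → ℝ)
    (x₀ : EuclideanSpace ℝ (Fin n)) (A : Set (EuclideanSpace ℝ (Fin n)))
    (x x' : ℝ → EuclideanSpace ℝ (Fin n)) : Prop :=
  IntegrableOn x' (Icc S T) ∧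
  (∀ t ∈ Icc S T, x t = x₀ + ∫ s in Icc S t, x' s) ∧
  (∀ t ∈ Icc S T, x t ∈ A) ∧
  IntegrableOn (fun t => L t (x t) (x' t)) (Icc S T)

/-- `x̄` (with derivative `x̄'`) is a `W^{1,1}`-local minimizer of (CV). -/
def IsW11LocalMinCV (S T : ℝ)
    (L : ℝ → EuclideanSpace ℝ (Fin n) → EuclideanSpace ℝ (Fin n) → ℝ)
    (x₀ : EuclideanSpace ℝ (Fin n)) (A : Set (EuclideanSpace ℝ (Fin n)))
    (xb xb' : ℝ → EuclideanSpace ℝ (Fin n)) : Prop :=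
  CVAdmissible S T L x₀ A xb xb' ∧
  ∃ ε > (0 : ℝ), ∀ x x' : ℝ → EuclideanSpace ℝ (Fin n), CVAdmissible S T L x₀ A x x' →
    ‖x S - xb S‖ + ∫ t in Icc S T, ‖x' t - xb' t‖ ≤ ε →
    ∫ t in Icc S T, L t (xb t) (xb' t) ≤ ∫ t in Icc S T, L t (x t) (x' t)

/-- Hypothesis (CV1): `L(t,x,v)` is measurable in `(t,v)`, bounded on bounded sets,
and Lipschitz in `x` near the reference arc, uniformly in `v`. -/
def HypCV1 (S T : ℝ) (L : ℝ → EuclideanSpace ℝ (Fin n) → EuclideanSpace ℝ (Fin n) → ℝ)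
    (xb : ℝ → EuclideanSpace ℝ (Fin n)) : Prop :=
  (∀ x : EuclideanSpace ℝ (Fin n),
    Measurable (fun p : ℝ × EuclideanSpace ℝ (Fin n) => L p.1 x p.2)) ∧
  (∀ r > (0 : ℝ), ∃ M : ℝ, ∀ t ∈ Icc S T, ∀ x v : EuclideanSpace ℝ (Fin n),
    ‖x‖ ≤ r → ‖v‖ ≤ r → |L t x v| ≤ M) ∧
  (∃ ε' > (0 : ℝ), ∃ K_L > (0 : ℝ), ∀ t ∈ Icc S T,
    ∀ x ∈ closedBall (xb t) ε', ∀ y ∈ closedBall (xb t) ε',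
    ∀ v : EuclideanSpace ℝ (Fin n), |L t x v - L t y v| ≤ K_L * ‖x - y‖)

/-- Lemma 3: existence of a bounded measurable "control" `v` pulling the dynamics
inside the state constraint set more than the reference minimizer. -/
theorem exists_inward_pointing_control
    (S T : ℝ) (hST : S < T)
    (L : ℝ → EuclideanSpace ℝ (Fin n) → EuclideanSpace ℝ (Fin n) → ℝ)
    (x₀ : EuclideanSpace ℝ (Fin n)) (A : Set (EuclideanSpace ℝ (Fin n)))
    (hA : IsClosed A) (hAne : A.Nonempty)
    (xb xb' : ℝ → EuclideanSpace ℝ (Fin n))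
    (hmin : IsW11LocalMinCV S T L x₀ A xb xb')
    (hLip : ∃ K : NNReal, LipschitzOnWith K xb (Icc S T))
    (hCV1 : HypCV1 S T L xb)
    (hCQ : ∀ z, z ∈ xb '' Icc S T → z ∈ frontier A →
      (interior (clarkeTangentCone A z)).Nonempty) :
    ∃ (ε ρ β C C₁ : ℝ), 0 < ε ∧ 0 < ρ ∧ 0 < β ∧ 0 < C ∧ 0 < C₁ ∧
      ∃ v : ℝ → EuclideanSpace ℝ (Fin n), Measurable v ∧
      (∀ᵐ t ∂(volume.restrict (Icc S T)), ‖v t - xb' t‖ ≤ C ∧ ‖v t‖ ≤ C₁) ∧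
      (∀ τ ∈ Icc S T, xb τ ∈ frontier A →
        ∀ᵐ s ∂(volume.restrict (Ioc (τ - ε) τ ∩ Icc S T)),
        ∀ᵐ t ∂(volume.restrict (Ioc (τ - ε) τ ∩ Icc S T)),
        ∀ η ∈ convexHull ℝ
          (limitingNormalCone A (xb s) ∩ sphere (0 : EuclideanSpace ℝ (Fin n)) 1),
          ⟪v t - xb' t, η⟫ < -β) ∧
      (x₀ ∈ frontier A →
        ∀ᵐ t ∂(volume.restrict (Ico S (S + ε))),
        ∀ x ∈ closedBall x₀ ρ ∩ frontier A,
        ∀ η ∈ convexHull ℝ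
          (limitingNormalCone A x ∩ sphere (0 : EuclideanSpace ℝ (Fin n)) 1),
          ⟪v t - xb' t, η⟫ < -β) := by
  classical
  obtain ⟨⟨hI, hrep, hmemA, -⟩, -⟩ := hmin
  obtain ⟨K, hK⟩ := hLip
  -- x̄(S) = x₀
  have hxbS : xb S = x₀ := by
    have h := hrep S (left_mem_Icc.mpr hST.le)
    have h0 : (∫ s in Icc S S, xb' s) = 0 := by
      rw [Icc_self]
      rw [Measure.restrict_eq_zero.mpr (by simp)]
      exact integral_zero_measure _
    rw [h, h0, add_zero]
  -- increments
  have hint : ∀ a b : ℝ, S ≤ a → a ≤ b → b ≤ T →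
      (∫ t in Icc a b, xb' t) = xb b - xb a := by
    intro a b hSa hab hbT
    have hIb : IntegrableOn xb' (Ioc S a) volume :=
      hI.mono_set (Ioc_subset_Icc_self.trans (Icc_subset_Icc le_rfl (hab.trans hbT)))
    have hIab : IntegrableOn xb' (Ioc a b) volume :=
      hI.mono_set ((Ioc_subset_Icc_self).trans (Icc_subset_Icc hSa hbT))
    have e1 : (∫ t in Ioc S b, xb' t) = (∫ t in Ioc S a, xb' t) + ∫ t in Ioc a b, xb' t := by
      rw [← Ioc_union_Ioc_eq_Ioc hSa hab]
      exact setIntegral_union (Ioc_disjoint_Ioc_of_le le_rfl) measurableSet_Ioc hIb hIab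
    have hb' := hrep b ⟨hSa.trans hab, hbT⟩
    have ha' := hrep a ⟨hSa, hab.trans hbT⟩
    calc (∫ t in Icc a b, xb' t) = ∫ t in Ioc a b, xb' t := integral_Icc_eq_integral_Ioc
      _ = (∫ t in Ioc S b, xb' t) - ∫ t in Ioc S a, xb' t := by rw [e1]; abel
      _ = (∫ t in Icc S b, xb' t) - ∫ t in Icc S a, xb' t := by
          rw [integral_Icc_eq_integral_Ioc, integral_Icc_eq_integral_Ioc]
      _ = xb b - xb a := by rw [hb', ha']; abel
  have hinc : ∀ a b : ℝ, S ≤ a → a ≤ b → b ≤ T →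
      ‖∫ t in Icc a b, xb' t‖ ≤ (K:ℝ) * (b - a) := by
    intro a b hSa hab hbT
    rw [hint a b hSa hab hbT, ← dist_eq_norm]
    have := hK.dist_le_mul b ⟨hSa.trans hab, hbT⟩ a ⟨hSa, hab.trans hbT⟩
    rwa [Real.dist_eq, abs_of_nonneg (by linarith)] at this
  have hbd : ∀ᵐ t ∂(volume.restrict (Icc S T)), ‖xb' t‖ ≤ (K:ℝ) :=
    aux_deriv_bound S T (K:ℝ) K.coe_nonneg xb' hI hinc
  -- measurable representative of xb'
  set g : ℝ → EuclideanSpace ℝ (Fin n) := hI.aestronglyMeasurable.mk xb' with hgdef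
  have hgm : Measurable g := hI.aestronglyMeasurable.stronglyMeasurable_mk.measurable
  have hgeq : xb' =ᵐ[volume.restrict (Icc S T)] g := hI.aestronglyMeasurable.ae_eq_mk
  -- clamp and continuity
  have hcont : ContinuousOn xb (Icc S T) := hK.continuousOn
  set c : ℝ → ℝ := fun t => max S (min t T) with hcdef
  have hc : Continuous c := continuous_const.max (continuous_id.min continuous_const)
  have hcmem : ∀ t, c t ∈ Icc S T := fun t =>
    ⟨le_max_left _ _, max_le hST.le (min_le_right _ _)⟩
  have hceq : ∀ t ∈ Icc S T, c t = t := fun t ht => by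
    rw [hcdef]; simp only [min_eq_left ht.2, max_eq_right ht.1]
  have hxc : Continuous (fun t => xb (c t)) := hcont.comp_continuous hc hcmem
  set B := xb '' Icc S T ∩ frontier A with hBdef
  have hBcpt : IsCompact B :=
    (isCompact_Icc.image_of_continuousOn hcont).inter_right isClosed_frontier
  by_cases hBne : B.Nonempty
  · -- main case
    have hdata : ∀ z ∈ B, ∃ (ξ : EuclideanSpace ℝ (Fin n)) (r ρ2 : ℝ), 0 < r ∧ 0 < ρ2 ∧
        ∀ x ∈ closedBall z ρ2, ∀ η ∈ limitingNormalCone A x, ‖η‖ = 1 → ⟪ξ, η⟫ ≤ -r :=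
      fun z hz => aux_local (hCQ z hz.1 hz.2)
    choose! ξ r ρf hr hρ hkey using hdata
    have hcov : B ⊆ ⋃ z ∈ B, ball z (ρf z / 2) := fun z hz =>
      mem_biUnion hz (mem_ball_self (by have := hρ z hz; linarith))
    obtain ⟨b', hb'B, hb'fin, hb'cov⟩ :=
      hBcpt.elim_finite_subcover_image (fun z _ => isOpen_ball) hcov
    set s : Finset (EuclideanSpace ℝ (Fin n)) := hb'fin.toFinset with hsdef
    have hsB : ∀ z ∈ s, z ∈ B := fun z hz => hb'B (hb'fin.mem_toFinset.mp hz)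
    have hcov' : ∀ w ∈ B, ∃ z ∈ s, dist w z < ρf z / 2 := by
      intro w hw
      have h := hb'cov hw
      rw [mem_iUnion₂] at h
      obtain ⟨z, hz, hmem⟩ := h
      exact ⟨z, hb'fin.mem_toFinset.mpr hz, mem_ball.mp hmem⟩
    have hsne : s.Nonempty := by
      obtain ⟨z0, hz0⟩ := hBne
      obtain ⟨z, hz, -⟩ := hcov' z0 hz0
      exact ⟨z, hz⟩
    set rmin := s.inf' hsne r with hrmindef
    set ρmin := s.inf' hsne ρf with hρmindef
    set Cx := s.sup' hsne (fun z => ‖ξ z‖) with hCxdef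
    have hrmin : 0 < rmin := (Finset.lt_inf'_iff _).mpr fun z hz => hr z (hsB z hz)
    have hρmin : 0 < ρmin := (Finset.lt_inf'_iff _).mpr fun z hz => hρ z (hsB z hz)
    have hrminle : ∀ z ∈ s, rmin ≤ r z := fun z hz => Finset.inf'_le _ hz
    have hρminle : ∀ z ∈ s, ρmin ≤ ρf z := fun z hz => Finset.inf'_le _ hz
    have hCx : ∀ z ∈ s, ‖ξ z‖ ≤ Cx := fun z hz => Finset.le_sup' (fun z => ‖ξ z‖) hz
    have hCx0 : 0 ≤ Cx := by
      obtain ⟨z0, hz0⟩ := hsne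
      exact (norm_nonneg (ξ z0)).trans (hCx z0 hz0)
    set ε := min (ρmin / (8 * ((K:ℝ) + 1))) (T - S) with hεdef
    have hK1 : (0:ℝ) < (K:ℝ) + 1 := by positivity
    have hε : 0 < ε := lt_min (by positivity) (by linarith)
    have hεTS : ε ≤ T - S := min_le_right _ _
    have hεle : ((K:ℝ) + 1) * ε ≤ ρmin / 8 := by
      have h1 : ε ≤ ρmin / (8 * ((K:ℝ) + 1)) := min_le_left _ _
      calc ((K:ℝ)+1) * ε ≤ ((K:ℝ)+1) * (ρmin / (8*((K:ℝ)+1))) :=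
            mul_le_mul_of_nonneg_left h1 hK1.le
        _ = ρmin / 8 := by field_simp
    have hKε : (K:ℝ) * ε ≤ ((K:ℝ)+1) * ε := by nlinarith [hε.le]
    set R : EuclideanSpace ℝ (Fin n) → ℝ := fun z => ρf z / 2 + ((K:ℝ)+1) * ε with hRdef
    set Lst : List (EuclideanSpace ℝ (Fin n) × ℝ × EuclideanSpace ℝ (Fin n)) :=
      s.toList.map (fun z => (z, R z, ξ z)) with hLstdef
    set Ξ : EuclideanSpace ℝ (Fin n) → EuclideanSpace ℝ (Fin n) := pickVec Lst with hΞdef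
    set v : ℝ → EuclideanSpace ℝ (Fin n) := fun t => g t + Ξ (xb (c t)) with hvdef
    have hvm : Measurable v := hgm.add ((pickVec_measurable Lst).comp hxc.measurable)
    have hΞbd : ∀ x, ‖Ξ x‖ ≤ Cx := by
      intro x
      rcases pickVec_range Lst x with h | he
      · rw [hΞdef, h]; simpa using hCx0
      · obtain ⟨e, he, hpe⟩ := he
        rw [hLstdef] at he
        obtain ⟨z, hz, rfl⟩ := List.mem_map.mp he
        rw [hΞdef, hpe]
        exact hCx z (Finset.mem_toList.mp hz)
    have hmain : ∀ t ∈ Icc S T, ∀ w, w ∈ B → dist (xb t) w ≤ (K:ℝ) * ε →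
        ∃ z₁ ∈ s, Ξ (xb t) = ξ z₁ ∧ dist (xb t) z₁ ≤ ρf z₁ / 2 + ((K:ℝ)+1) * ε := by
      intro t ht w hw hdist
      obtain ⟨z₀, hz₀, hz₀d⟩ := hcov' w hw
      have hmem : dist (xb t) z₀ ≤ R z₀ := by
        have h4 := dist_triangle (xb t) w z₀
        rw [hRdef]
        simp only
        linarith [hKε]
      have hex : ∃ e ∈ Lst, dist (xb t) e.1 ≤ e.2.1 := by
        refine ⟨(z₀, R z₀, ξ z₀), ?_, hmem⟩
        rw [hLstdef]
        exact List.mem_map.mpr ⟨z₀, Finset.mem_toList.mpr hz₀, rfl⟩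
      obtain ⟨e, heL, hde, hpe⟩ := pickVec_spec Lst _ hex
      rw [hLstdef] at heL
      obtain ⟨z₁, hz₁, rfl⟩ := List.mem_map.mp heL
      exact ⟨z₁, Finset.mem_toList.mp hz₁, hpe, hde⟩
    have hcone : ∀ z₁ ∈ s, ∀ x : EuclideanSpace ℝ (Fin n), dist x z₁ ≤ ρf z₁ →
        ∀ η ∈ convexHull ℝ (limitingNormalCone A x ∩ sphere (0:EuclideanSpace ℝ (Fin n)) 1),
        ⟪ξ z₁, η⟫ ≤ -rmin := by
      intro z₁ hz₁ x hx η hη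
      have hsub : limitingNormalCone A x ∩ sphere (0:EuclideanSpace ℝ (Fin n)) 1 ⊆
          {w | ⟪ξ z₁, w⟫ ≤ -rmin} := by
        rintro w ⟨hw1, hw2⟩
        have h1 := hkey z₁ (hsB z₁ hz₁) x (mem_closedBall.mpr hx) w hw1
          (mem_sphere_zero_iff_norm.mp hw2)
        have h2 := hrminle z₁ hz₁
        exact le_trans h1 (by linarith)
      have hconv : Convex ℝ {w : EuclideanSpace ℝ (Fin n) | ⟪ξ z₁, w⟫ ≤ -rmin} :=
        convex_halfSpace_le ⟨fun a b => inner_add_right _ _ _,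
          fun cc a => by rw [real_inner_smul_right, smul_eq_mul]⟩ _
      exact convexHull_min hsub hconv hη
    refine ⟨ε, ρmin / 4, rmin / 2, Cx + 1, (K:ℝ) + (Cx + 1), hε, by linarith, by linarith,
      by linarith, by linarith [K.coe_nonneg], v, hvm, ?_, ?_, ?_⟩
    · -- bounds
      filter_upwards [hgeq, hbd, ae_restrict_mem measurableSet_Icc] with t h1 h2 h3
      have hvt : v t - xb' t = Ξ (xb t) := by
        rw [hvdef]
        simp only
        rw [hceq t h3, h1]
        abel
      constructor
      · rw [hvt]; linarith [hΞbd (xb t)]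
      · have h4 : v t = Ξ (xb t) + xb' t := by
          rw [← hvt]; abel
        rw [h4]
        calc ‖Ξ (xb t) + xb' t‖ ≤ ‖Ξ (xb t)‖ + ‖xb' t‖ := norm_add_le _ _
          _ ≤ (K:ℝ) + (Cx + 1) := by linarith [hΞbd (xb t)]
    · -- (ii)
      intro τ hτ hfr
      have hτB : xb τ ∈ B := ⟨⟨τ, hτ, rfl⟩, hfr⟩
      have hWm : MeasurableSet (Ioc (τ - ε) τ ∩ Icc S T) :=
        measurableSet_Ioc.inter measurableSet_Icc
      have hae1 : ∀ᵐ t ∂(volume.restrict (Ioc (τ - ε) τ ∩ Icc S T)), xb' t = g t :=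
        ae_restrict_of_ae_restrict_of_subset inter_subset_right hgeq
      filter_upwards [ae_restrict_mem hWm] with s' hs'
      filter_upwards [ae_restrict_mem hWm, hae1] with t ht hgt
      intro η hη
      have htI : t ∈ Icc S T := ht.2
      have hs'I : s' ∈ Icc S T := hs'.2
      have hdt : dist (xb t) (xb τ) ≤ (K:ℝ) * ε := by
        have h1 := hK.dist_le_mul t htI τ hτ
        have h2 : dist t τ ≤ ε := by
          rw [Real.dist_eq, abs_of_nonpos (by linarith [ht.1.2] : t - τ ≤ 0)]
          linarith [ht.1.1]
        calc dist (xb t) (xb τ) ≤ (K:ℝ) * dist t τ := h1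
          _ ≤ (K:ℝ) * ε := mul_le_mul_of_nonneg_left h2 K.coe_nonneg
      obtain ⟨z₁, hz₁s, hΞeq, hdz⟩ := hmain t htI (xb τ) hτB hdt
      have hds' : dist (xb s') z₁ ≤ ρf z₁ := by
        have h1 := hK.dist_le_mul s' hs'I t htI
        have h2 : dist s' t ≤ ε := by
          rw [Real.dist_eq, abs_sub_le_iff]
          constructor
          · linarith [hs'.1.2, ht.1.1]
          · linarith [ht.1.2, hs'.1.1]
        have h3 : dist (xb s') (xb t) ≤ (K:ℝ) * ε :=
          le_trans h1 (mul_le_mul_of_nonneg_left h2 K.coe_nonneg)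
        have h4 := dist_triangle (xb s') (xb t) z₁
        have h6 := hρminle z₁ hz₁s
        linarith [hKε, hεle]
      have hfin := hcone z₁ hz₁s (xb s') hds' η hη
      have hva : v t - xb' t = ξ z₁ := by
        rw [hvdef]
        simp only
        rw [hceq t htI, hΞeq, hgt]
        abel
      rw [hva]
      linarith [hfin]
    · -- (iii)
      intro hx₀
      have hx₀B : x₀ ∈ B := ⟨⟨S, left_mem_Icc.mpr hST.le, hxbS⟩, hx₀⟩
      have hsub2 : Ico S (S + ε) ⊆ Icc S T := fun t ht =>
        ⟨ht.1, by linarith [ht.2, hεTS]⟩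
      have hae1 : ∀ᵐ t ∂(volume.restrict (Ico S (S + ε))), xb' t = g t :=
        ae_restrict_of_ae_restrict_of_subset hsub2 hgeq
      filter_upwards [ae_restrict_mem measurableSet_Ico, hae1] with t ht hgt
      intro x hx η hη
      have htI : t ∈ Icc S T := hsub2 ht
      have hdt : dist (xb t) x₀ ≤ (K:ℝ) * ε := by
        rw [← hxbS]
        have h1 := hK.dist_le_mul t htI S (left_mem_Icc.mpr hST.le)
        have h2 : dist t S ≤ ε := by
          rw [Real.dist_eq, abs_of_nonneg (by linarith [ht.1] : (0:ℝ) ≤ t - S)]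
          linarith [ht.2]
        calc dist (xb t) (xb S) ≤ (K:ℝ) * dist t S := h1
          _ ≤ (K:ℝ) * ε := mul_le_mul_of_nonneg_left h2 K.coe_nonneg
      obtain ⟨z₁, hz₁s, hΞeq, hdz⟩ := hmain t htI x₀ hx₀B hdt
      have hdx : dist x z₁ ≤ ρf z₁ := by
        have h1 : dist x x₀ ≤ ρmin / 4 := mem_closedBall.mp hx.1
        have h2 := dist_triangle x x₀ z₁
        have h3 := dist_triangle x₀ (xb t) z₁
        have h4 : dist x₀ (xb t) = dist (xb t) x₀ := dist_comm _ _
        have h6 := hρminle z₁ hz₁s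
        linarith [hKε, hεle]
      have hfin := hcone z₁ hz₁s x hdx η hη
      have hva : v t - xb' t = ξ z₁ := by
        rw [hvdef]
        simp only
        rw [hceq t htI, hΞeq, hgt]
        abel
      rw [hva]
      linarith [hfin]
  · -- boundary never touched
    refine ⟨1, 1, 1, 1, (K:ℝ) + 1, one_pos, one_pos, one_pos, one_pos,
      by positivity, g, hgm, ?_, ?_, ?_⟩
    · filter_upwards [hgeq, hbd] with t h1 h2
      have h1' : g t - xb' t = 0 := by rw [h1]; simp
      constructor
      · rw [h1']; simp
      · rw [← h1]; linarith
    · intro τ hτ hfr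
      exact absurd ⟨⟨τ, hτ, rfl⟩, hfr⟩ (fun h => hBne ⟨xb τ, h⟩)
    · intro hx₀
      exact absurd ⟨⟨S, left_mem_Icc.mpr hST.le, hxbS⟩, hx₀⟩ (fun h => hBne ⟨x₀, h⟩)
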